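/- Let F be the cumulative distribution function of a discrete random variable Y taking values in ℕ, and let U ~ Uniform(0,1) be independent of Y. Define the randomized quantile residual transform V = F(Y−1) + U·(F(Y) − F(Y−1)) (with F(−1) = 0). Then V is uniformly distributed on (0,1). -/

import Mathlib

open MeasureTheory ProbabilityTheory

private lemma volA (s : ℝ) :
    volume (Set.Iic s ∩ Set.Ioo (0:ℝ) 1) = ENNReal.ofReal (min (max s 0) 1) := by
  rcases le_or_gt s 0 with h | h
  · have he : Set.Iic s ∩ Set.Ioo (0:ℝ) 1 = ∅ := by
      ext x
      simp only [Set.mem_inter_iff, Set.mem_Iic, Set.mem_Ioo, Set.mem_empty_iff_false, iff_false,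
        not_and]
      intro h1 h2; linarith
    have h0 : min (max s 0) 1 = 0 := by rw [max_eq_right h]; simp
    simp [he, h0]
  · rcases lt_or_ge s 1 with h1 | h1
    · have he : Set.Iic s ∩ Set.Ioo (0:ℝ) 1 = Set.Ioc 0 s := by
        ext x
        simp only [Set.mem_inter_iff, Set.mem_Iic, Set.mem_Ioo, Set.mem_Ioc]
        constructor
        · rintro ⟨a, b, c⟩; exact ⟨b, a⟩
        · rintro ⟨a, b⟩; exact ⟨b, a, by linarith⟩
      rw [he, Real.volume_Ioc, max_eq_left h.le, min_eq_left h1.le, sub_zero]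
    · have he : Set.Iic s ∩ Set.Ioo (0:ℝ) 1 = Set.Ioo 0 1 := by
        apply Set.inter_eq_right.mpr
        intro x hx; exact le_trans hx.2.le h1
      rw [he, Real.volume_Ioo, max_eq_left (by linarith : (0:ℝ) ≤ s), min_eq_right h1, sub_zero]

private lemma clampA (a b t : ℝ) (ha : 0 ≤ a) (hab : a < b) :
    (b - a) * min (max ((t - a)/(b-a)) 0) 1 = min (max t 0) b - min (max t 0) a := by
  have hp : 0 < b - a := by linarith
  have h1 : (b - a) * min (max ((t - a)/(b-a)) 0) 1 = min (max (t-a) 0) (b-a) := by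
    rw [mul_min_of_nonneg _ _ hp.le, mul_max_of_nonneg _ _ hp.le, mul_div_cancel₀ _ hp.ne',
      mul_zero, mul_one]
  rw [h1]
  simp only [min_def, max_def]
  split_ifs <;> linarith

/-- Randomized quantile residual transform (Dunn–Smyth): let `Y` be an `ℕ`-valued
random variable with cdf `F` (so `F(Y-1)` is the probability of a strictly smaller
value, with `F(-1) = 0`), and let `U ~ Uniform(0,1)` be independent of `Y`. Then
`V = F(Y-1) + U · (F(Y) - F(Y-1))` is uniformly distributed on `(0,1)`. -/
theorem randomized_quantile_residual_uniform
    {Ω : Type*} [MeasureSpace Ω] [IsProbabilityMeasure (ℙ : Measure Ω)]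
    (Y : Ω → ℕ) (U : Ω → ℝ) (hY : Measurable Y) (hU : Measurable U)
    (hUnif : Measure.map U ℙ = volume.restrict (Set.Ioo (0 : ℝ) 1))
    (hindep : IndepFun Y U ℙ)
    (F Fm : ℕ → ℝ)
    (hF : ∀ m, F m = (ℙ {ω | Y ω ≤ m}).toReal)
    (hFm : ∀ m, Fm m = (ℙ {ω | Y ω < m}).toReal)
    (V : Ω → ℝ)
    (hV : ∀ ω, V ω = Fm (Y ω) + U ω * (F (Y ω) - Fm (Y ω))) :
    Measure.map V ℙ = volume.restrict (Set.Ioo (0 : ℝ) 1) := by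
  classical
  have hFmY : Measurable fun ω => Fm (Y ω) := measurable_from_top.comp hY
  have hFY : Measurable fun ω => F (Y ω) := measurable_from_top.comp hY
  have hVmeas : Measurable V := by
    have hfun : V = fun ω => Fm (Y ω) + U ω * (F (Y ω) - Fm (Y ω)) := funext hV
    rw [hfun]
    exact hFmY.add (hU.mul (hFY.sub hFmY))
  haveI hmapP : IsProbabilityMeasure (Measure.map V ℙ) :=
    Measure.isProbabilityMeasure_map hVmeas.aemeasurable
  refine Measure.ext_of_Iic _ _ fun t => ?_
  have hne : ∀ s : Set Ω, ℙ s ≠ ⊤ := fun s => measure_ne_top _ _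
  have hFmF : ∀ n, Fm n ≤ F n := by
    intro n; rw [hF, hFm]
    exact ENNReal.toReal_mono (hne _) (measure_mono (Set.setOf_subset_setOf.mpr fun ω => le_of_lt))
  have hFmnonneg : ∀ n, 0 ≤ Fm n := fun n => by rw [hFm]; exact ENNReal.toReal_nonneg
  have hstep : ∀ n, F n = Fm (n+1) := by
    intro n
    have hset : {ω | Y ω ≤ n} = {ω | Y ω < n + 1} := by
      ext ω; simp [Nat.lt_succ_iff]
    rw [hF, hFm, hset]
  have hFm0 : Fm 0 = 0 := by
    have : {ω | Y ω < 0} = (∅ : Set Ω) := by ext ω; simp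
    rw [hFm, this, measure_empty, ENNReal.toReal_zero]
  have hprob : ∀ n, ℙ (Y ⁻¹' {n}) = ENNReal.ofReal (F n - Fm n) := by
    intro n
    have hsplit : {ω | Y ω ≤ n} = {ω | Y ω < n} ∪ Y ⁻¹' {n} := by
      ext ω
      simp only [Set.mem_setOf_eq, Set.mem_union, Set.mem_preimage, Set.mem_singleton_iff]
      omega
    have hdisj : Disjoint {ω | Y ω < n} (Y ⁻¹' {n}) := by
      rw [Set.disjoint_left]
      intro ω h1 h2
      simp only [Set.mem_setOf_eq] at h1
      simp only [Set.mem_preimage, Set.mem_singleton_iff] at h2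
      omega
    have hm : ℙ {ω | Y ω ≤ n} = ℙ {ω | Y ω < n} + ℙ (Y ⁻¹' {n}) := by
      rw [hsplit, measure_union hdisj (hY (measurableSet_singleton n))]
    have : F n - Fm n = (ℙ (Y ⁻¹' {n})).toReal := by
      rw [hF, hFm, hm, ENNReal.toReal_add (hne _) (hne _)]
      ring
    rw [this, ENNReal.ofReal_toReal (hne _)]
  set B : ℕ → Set ℝ := fun n => {u : ℝ | Fm n + u * (F n - Fm n) ≤ t} with hBdef
  have hBmeas : ∀ n, MeasurableSet (B n) := fun n =>
    measurableSet_le ((measurable_id.mul_const _).const_add _) measurable_const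
  have hdecomp : V ⁻¹' Set.Iic t = ⋃ n, (Y ⁻¹' {n} ∩ U ⁻¹' B n) := by
    ext ω
    simp only [Set.mem_preimage, Set.mem_Iic, Set.mem_iUnion, Set.mem_inter_iff,
      Set.mem_singleton_iff, hBdef, Set.mem_setOf_eq]
    constructor
    · intro h
      exact ⟨Y ω, rfl, by rw [← hV ω]; exact h⟩
    · rintro ⟨n, hn, h⟩
      rw [hV ω, hn]
      exact h
  have hpd : Pairwise (Function.onFun Disjoint fun n => Y ⁻¹' {n} ∩ U ⁻¹' B n) := by
    intro m n hmn
    refine Set.disjoint_left.mpr ?_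
    rintro ω ⟨h1, _⟩ ⟨h2, _⟩
    simp only [Set.mem_preimage, Set.mem_singleton_iff] at h1 h2
    exact hmn (h1.symm.trans h2)
  rw [Measure.map_apply hVmeas measurableSet_Iic, hdecomp,
    measure_iUnion hpd (fun n => (hY (measurableSet_singleton n)).inter (hU (hBmeas n)))]
  have hterm : ∀ n, ℙ (Y ⁻¹' {n} ∩ U ⁻¹' B n)
      = ENNReal.ofReal (min (max t 0) (Fm (n+1)) - min (max t 0) (Fm n)) := by
    intro n
    rw [hindep.measure_inter_preimage_eq_mul _ _ (measurableSet_singleton n) (hBmeas n),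
      hprob n, ← Measure.map_apply hU (hBmeas n), hUnif, Measure.restrict_apply (hBmeas n)]
    rcases eq_or_lt_of_le (hFmF n) with heq | hlt
    · rw [← hstep n, ← heq]
      simp
    · have hBeq : B n ∩ Set.Ioo 0 1 = Set.Iic ((t - Fm n)/(F n - Fm n)) ∩ Set.Ioo 0 1 := by
        congr 1
        ext u
        simp only [hBdef, Set.mem_setOf_eq, Set.mem_Iic]
        rw [le_div_iff₀ (by linarith)]
        constructor <;> intro h <;> nlinarith
      rw [hBeq, volA, ← ENNReal.ofReal_mul (by linarith),
        clampA _ _ _ (hFmnonneg n) hlt, hstep n]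
  simp only [hterm]
  set q : ℕ → ℝ := fun n => min (max t 0) (Fm n) with hq
  have hFmmono : Monotone Fm := by
    intro m n hmn
    rw [hFm, hFm]
    exact ENNReal.toReal_mono (hne _) (measure_mono fun ω h => lt_of_lt_of_le h hmn)
  have hqmono : Monotone q := fun m n hmn => min_le_min le_rfl (hFmmono hmn)
  have hq0 : q 0 = 0 := by
    simp only [hq, hFm0]
    exact min_eq_right (le_max_right t 0)
  have hnonneg : ∀ n, 0 ≤ q (n+1) - q n := fun n => sub_nonneg.mpr (hqmono (Nat.le_succ n))
  have hsum : ∀ N, ∑ n ∈ Finset.range N, ENNReal.ofReal (q (n+1) - q n)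
      = ENNReal.ofReal (q N) := by
    intro N
    rw [← ENNReal.ofReal_sum_of_nonneg (fun i _ => hnonneg i), Finset.sum_range_sub, hq0,
      sub_zero]
  rw [ENNReal.tsum_eq_iSup_nat]
  simp only [show ∀ N, ∑ n ∈ Finset.range N, ENNReal.ofReal (min (max t 0) (Fm (n+1)) - min (max t 0) (Fm n))
      = ENNReal.ofReal (q N) from hsum]
  have hFmlim : Filter.Tendsto Fm Filter.atTop (nhds 1) := by
    have hmono : Monotone fun n : ℕ => {ω | Y ω < n} := fun m n hmn ω h =>
      lt_of_lt_of_le h hmn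
    have h1 := tendsto_measure_iUnion_atTop (μ := (ℙ : Measure Ω)) hmono
    have h2 : (⋃ n : ℕ, {ω | Y ω < n}) = Set.univ := by
      ext ω
      simp only [Set.mem_iUnion, Set.mem_setOf_eq, Set.mem_univ, iff_true]
      exact ⟨Y ω + 1, Nat.lt_succ_self _⟩
    rw [h2, measure_univ] at h1
    have h3 := (ENNReal.tendsto_toReal (by norm_num : (1:ENNReal) ≠ ⊤)).comp h1
    have h4 : Fm = fun n => (ℙ {ω | Y ω < n}).toReal := funext hFm
    rw [h4]
    exact h3
  have hqlim : Filter.Tendsto (fun N => ENNReal.ofReal (q N)) Filter.atTop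
      (nhds (ENNReal.ofReal (min (max t 0) 1))) := by
    exact (ENNReal.continuous_ofReal.tendsto _).comp
      (Filter.Tendsto.min tendsto_const_nhds hFmlim)
  have hmono2 : Monotone fun N => ENNReal.ofReal (q N) := fun m n h =>
    ENNReal.ofReal_le_ofReal (hqmono h)
  rw [tendsto_nhds_unique (tendsto_atTop_iSup hmono2) hqlim,
    Measure.restrict_apply measurableSet_Iic, volA]
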